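/- Let V_m be the space of complex homogeneous polynomials of degree m in z₀, z₁, with the SU(2)-action (ρ_m(g)f)(z) = f(z·g). Let K̃₀ ⊂ SU(2) be the quaternion group of order 8 generated by ±I, ±[[0,−1],[1,0]], ±[[i,0],[0,−i]], ±[[0,i],[i,0]]. Then the fixed subspace (V_m)^{K̃₀} is nonzero if and only if m is even and m ≥ 4 (or m = 0). -/

import Mathlib

set_option maxHeartbeats 1000000

open MvPolynomial

/-- The action of a `2×2` complex matrix `g` on polynomials in `z₀, z₁` given by
`(ρ(g) f)(z) = f(z·g)`. -/
noncomputable def actPoly (g : Matrix (Fin 2) (Fin 2) ℂ) (f : MvPolynomial (Fin 2) ℂ) :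
    MvPolynomial (Fin 2) ℂ :=
  MvPolynomial.aeval (fun k : Fin 2 => ∑ i : Fin 2, MvPolynomial.C (g i k) * X i) f

/-- The quaternion group of order `8` in `SU(2)`, generated by
`±I`, `±[[0,−1],[1,0]]`, `±[[i,0],[0,−i]]`, `±[[0,i],[i,0]]`. -/
noncomputable def Q8 : Set (Matrix (Fin 2) (Fin 2) ℂ) :=
  {1, -1, !![0, -1; 1, 0], -(!![0, -1; 1, 0]),
   !![Complex.I, 0; 0, -Complex.I], -(!![Complex.I, 0; 0, -Complex.I]),
   !![0, Complex.I; Complex.I, 0], -(!![0, Complex.I; Complex.I, 0])}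

/- ## Auxiliary lemmas -/

lemma coeff_aeval_diag (c : Fin 2 → ℂ) (f : MvPolynomial (Fin 2) ℂ) (d : Fin 2 →₀ ℕ) :
    coeff d (aeval (fun k => (C (c k) * X k : MvPolynomial (Fin 2) ℂ)) f)
      = c 0 ^ d 0 * c 1 ^ d 1 * coeff d f := by
  induction f using MvPolynomial.induction_on' with
  | add p q hp hq =>
    simp only [map_add, coeff_add, hp, hq]; ring
  | monomial e a =>
    have key : (aeval (fun k => (C (c k) * X k : MvPolynomial (Fin 2) ℂ)))
        (monomial e a) = monomial e (a * (c 0 ^ e 0 * c 1 ^ e 1)) := by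
      rw [aeval_monomial]
      rw [Finsupp.prod_fintype _ _ (fun i => pow_zero _), Fin.prod_univ_two]
      rw [monomial_eq, Finsupp.prod_fintype _ _ (fun i => pow_zero _), Fin.prod_univ_two]
      simp only [mul_pow, ← C_pow, algebraMap_eq, C_mul]
      ring
    rw [key, coeff_monomial, coeff_monomial]
    split
    · next h => subst h; ring
    · ring

noncomputable def pA : MvPolynomial (Fin 2) ℂ := X 0 ^ 2 * X 1 ^ 2
noncomputable def pC : MvPolynomial (Fin 2) ℂ := X 0 * X 1 * (X 0 ^ 4 - X 1 ^ 4)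

lemma I6 : Complex.I ^ 6 = -1 := by
  rw [show (6:ℕ) = 2*3 by rfl, pow_mul, Complex.I_sq]; ring

lemma act_pA (g : Matrix (Fin 2) (Fin 2) ℂ) (hg : g ∈ Q8) : actPoly g pA = pA := by
  simp only [Q8, Set.mem_insert_iff, Set.mem_singleton_iff] at hg
  rcases hg with rfl|rfl|rfl|rfl|rfl|rfl|rfl|rfl <;>
  · simp [actPoly, pA, Fin.sum_univ_two]
    try ring_nf
    try simp only [← C_pow, Complex.I_sq, I6, map_neg, map_one]
    try norm_num
    try ring

lemma act_pC (g : Matrix (Fin 2) (Fin 2) ℂ) (hg : g ∈ Q8) : actPoly g pC = pC := by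
  simp only [Q8, Set.mem_insert_iff, Set.mem_singleton_iff] at hg
  rcases hg with rfl|rfl|rfl|rfl|rfl|rfl|rfl|rfl <;>
  · simp [actPoly, pC, Fin.sum_univ_two]
    try ring_nf
    try simp only [← C_pow, I6, Complex.I_sq, map_neg, map_one]
    try norm_num
    try ring

lemma pA_hom : pA.IsHomogeneous 4 := by
  have := ((isHomogeneous_X ℂ (0 : Fin 2)).pow 2).mul ((isHomogeneous_X ℂ (1 : Fin 2)).pow 2)
  simpa [pA] using this

lemma pC_hom : pC.IsHomogeneous 6 := by
  have h1 := (isHomogeneous_X ℂ (0 : Fin 2)).mul (isHomogeneous_X ℂ (1 : Fin 2))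
  have h2 := ((isHomogeneous_X ℂ (0 : Fin 2)).pow 4).sub ((isHomogeneous_X ℂ (1 : Fin 2)).pow 4)
  have := h1.mul h2
  simpa [pC] using this

lemma pA_ne : pA ≠ 0 :=
  mul_ne_zero (pow_ne_zero _ (X_ne_zero _)) (pow_ne_zero _ (X_ne_zero _))

lemma pC_ne : pC ≠ 0 := by
  refine mul_ne_zero (mul_ne_zero (X_ne_zero _) (X_ne_zero _)) (sub_ne_zero.mpr ?_)
  intro hEq
  have := congrArg (coeff (Finsupp.single 0 4)) hEq
  simp [coeff_X_pow, Finsupp.single_eq_single_iff] at this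

lemma degree_eq (d : Fin 2 →₀ ℕ) : d.degree = d 0 + d 1 := by
  rw [Finsupp.degree_apply, Finset.sum_subset (Finset.subset_univ _), Fin.sum_univ_two]
  intro i _ hi
  simpa using Finsupp.notMem_support_iff.mp hi

lemma sub_neg_one :
    (fun k : Fin 2 => ∑ i : Fin 2, (C ((-1 : Matrix (Fin 2) (Fin 2) ℂ) i k) * X i :
      MvPolynomial (Fin 2) ℂ))
    = fun k => C ((![(-1 : ℂ), -1]) k) * X k := by
  funext k; fin_cases k <;> simp [Fin.sum_univ_two, Matrix.one_apply]

lemma sub_diagI :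
    (fun k : Fin 2 => ∑ i : Fin 2, (C ((!![Complex.I, 0; 0, -Complex.I]) i k) * X i :
      MvPolynomial (Fin 2) ℂ))
    = fun k => C ((![Complex.I, -Complex.I]) k) * X k := by
  funext k; fin_cases k <;> simp [Fin.sum_univ_two]

/-- the subspace of `V_m` (homogeneous polynomials of degree `m`) fixed by
the quaternion group `K̃₀` of order `8` is nonzero iff `m = 0` or (`m` even and `m ≥ 4`). -/
theorem stmt10 (m : ℕ) :
    (∃ f : MvPolynomial (Fin 2) ℂ, f.IsHomogeneous m ∧ f ≠ 0 ∧
      ∀ g ∈ Q8, actPoly g f = f) ↔ (m = 0 ∨ (Even m ∧ 4 ≤ m)) := by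
  constructor
  · rintro ⟨f, hf, hne, hinv⟩
    -- first: m must be even
    have hmem1 : (-1 : Matrix (Fin 2) (Fin 2) ℂ) ∈ Q8 := by simp [Q8]
    have heven : Even m := by
      by_contra hodd
      have hodd' : Odd m := Nat.not_even_iff_odd.mp hodd
      apply hne
      ext d
      by_cases h0 : coeff d f = 0
      · simpa using h0
      have hdeg : d.degree = m := by
        by_contra hh; exact h0 (hf.coeff_eq_zero hh)
      have h := congrArg (coeff d) (hinv (-1) hmem1)
      unfold actPoly at h
      rw [sub_neg_one, coeff_aeval_diag] at h
      simp only [Matrix.cons_val_zero, Matrix.cons_val_one, Matrix.head_cons] at h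
      have hpow : (-1 : ℂ) ^ (d 0) * (-1) ^ (d 1) = -1 := by
        rw [← pow_add]
        exact Odd.neg_one_pow (by rw [← degree_eq d, hdeg] at *; exact hodd')
      rw [hpow] at h
      have : coeff d f = 0 := by linear_combination (-1/2 : ℂ) * h
      simpa using this
    -- m ≠ 2
    have hm2 : m ≠ 2 := by
      rintro rfl
      have hmemI : (!![Complex.I, 0; 0, -Complex.I]) ∈ Q8 := by simp [Q8]
      have key : ∀ d : Fin 2 →₀ ℕ, Complex.I ^ (d 0) * (-Complex.I) ^ (d 1) ≠ 1 →
          coeff d f = 0 := by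
        intro d hd
        by_cases h0 : coeff d f = 0
        · exact h0
        have h := congrArg (coeff d) (hinv _ hmemI)
        unfold actPoly at h
        rw [sub_diagI, coeff_aeval_diag] at h
        simp only [Matrix.cons_val_zero, Matrix.cons_val_one, Matrix.head_cons] at h
        have h' : (Complex.I ^ (d 0) * (-Complex.I) ^ (d 1) - 1) * coeff d f = 0 := by
          linear_combination h
        rcases mul_eq_zero.mp h' with h'' | h''
        · exact absurd (by linear_combination h'') hd
        · exact absurd h'' h0
      have h20 : coeff (Finsupp.single 0 2) f = 0 := by
        apply key
        simp only [Finsupp.single_apply]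
        norm_num [Complex.I_sq]
      have h02 : coeff (Finsupp.single 1 2) f = 0 := by
        apply key
        simp only [Finsupp.single_apply]
        norm_num [Complex.I_sq]
      set d11 : Fin 2 →₀ ℕ := Finsupp.single 0 1 + Finsupp.single 1 1 with hd11
      have hd11v0 : d11 0 = 1 := by simp [hd11, Finsupp.single_apply]
      have hd11v1 : d11 1 = 1 := by simp [hd11, Finsupp.single_apply]
      have hXX : (monomial d11 (1 : ℂ) : MvPolynomial (Fin 2) ℂ) = X 0 * X 1 := by
        rw [monomial_eq, Finsupp.prod_fintype _ _ (fun i => pow_zero _), Fin.prod_univ_two]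
        simp [hd11v0, hd11v1]
      have claim : f = C (coeff d11 f) * (X 0 * X 1) := by
        ext d
        rw [← hXX, coeff_C_mul, coeff_monomial]
        by_cases hdd : d11 = d
        · subst hdd; simp
        · rw [if_neg hdd, mul_zero]
          by_cases hdeg : d.degree = 2
          · rw [degree_eq] at hdeg
            have hd0 : d 0 ≤ 2 := by omega
            interval_cases h : d 0
            · -- d 0 = 0, d 1 = 2, so d = single 1 2
              have : d = Finsupp.single 1 2 := by
                ext i; fin_cases i <;> simp [Finsupp.single_apply] <;> omega
              rw [this]; exact h02
            · -- d 0 = 1, d 1 = 1, so d = d11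
              exfalso; apply hdd
              ext i; fin_cases i <;> simp [hd11v0, hd11v1] <;> omega
            · -- d 0 = 2, d 1 = 0, so d = single 0 2
              have : d = Finsupp.single 0 2 := by
                ext i; fin_cases i <;> simp [Finsupp.single_apply] <;> omega
              rw [this]; exact h20
          · exact hf.coeff_eq_zero hdeg
      have hmemJ : (!![(0:ℂ), -1; 1, 0]) ∈ Q8 := by simp [Q8]
      have e0 : (aeval (R := ℂ) (fun k : Fin 2 => ∑ i : Fin 2,
          (C ((!![(0:ℂ), -1; 1, 0]) i k) * X i : MvPolynomial (Fin 2) ℂ)))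
          (X 0 : MvPolynomial (Fin 2) ℂ) = X 1 := by
        rw [aeval_X]; simp [Fin.sum_univ_two]
      have e1 : (aeval (R := ℂ) (fun k : Fin 2 => ∑ i : Fin 2,
          (C ((!![(0:ℂ), -1; 1, 0]) i k) * X i : MvPolynomial (Fin 2) ℂ)))
          (X 1 : MvPolynomial (Fin 2) ℂ) = -X 0 := by
        rw [aeval_X]; simp [Fin.sum_univ_two]
      have hact : actPoly !![(0:ℂ), -1; 1, 0] (C (coeff d11 f) * (X 0 * X 1))
          = -(C (coeff d11 f) * (X 0 * X 1)) := by
        unfold actPoly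
        rw [map_mul, map_mul, e0, e1, aeval_C, algebraMap_eq]
        ring
      have h := hinv _ hmemJ
      rw [claim] at h
      rw [hact, ← claim] at h
      have h2f : (2 : ℂ) • f = 0 := by
        rw [two_smul]
        nth_rewrite 1 [← h]
        ring
      exact hne ((smul_eq_zero.mp h2f).resolve_left two_ne_zero)
    -- conclude
    rcases Nat.eq_zero_or_pos m with rfl | hpos
    · exact Or.inl rfl
    · refine Or.inr ⟨heven, ?_⟩
      have := Nat.even_iff.mp heven
      omega
  · rintro (rfl | ⟨hev, h4⟩)
    · exact ⟨1, isHomogeneous_one _ _, one_ne_zero, fun g hg => by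
        unfold actPoly; simp⟩
    · have hmod : m % 4 = 0 ∨ m % 4 = 2 := by
        have := Nat.even_iff.mp hev; omega
      rcases hmod with hr | hr
      · -- f = pA ^ (m/4)
        refine ⟨pA ^ (m / 4), ?_, pow_ne_zero _ pA_ne, ?_⟩
        · have := pA_hom.pow (m / 4)
          rwa [show 4 * (m / 4) = m by omega] at this
        · intro g hg
          have : actPoly g (pA ^ (m / 4)) = actPoly g pA ^ (m / 4) :=
            map_pow (aeval _) pA (m / 4)
          rw [this, act_pA g hg]
      · -- f = pA ^ ((m-6)/4) * pC
        refine ⟨pA ^ ((m - 6) / 4) * pC, ?_, mul_ne_zero (pow_ne_zero _ pA_ne) pC_ne, ?_⟩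
        · have := (pA_hom.pow ((m - 6) / 4)).mul pC_hom
          rwa [show 4 * ((m - 6) / 4) + 6 = m by omega] at this
        · intro g hg
          have h1 : actPoly g (pA ^ ((m - 6) / 4) * pC)
              = actPoly g (pA ^ ((m - 6) / 4)) * actPoly g pC :=
            map_mul (aeval _) _ _
          have h2 : actPoly g (pA ^ ((m - 6) / 4)) = actPoly g pA ^ ((m - 6) / 4) :=
            map_pow (aeval _) pA _
          rw [h1, h2, act_pA g hg, act_pC g hg]
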